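/- Soundness of fe: Define next^R_{e1,e2}(ψ) = { (s1,s2) | Δ_{e1,e2}(ψ) ≠ ∅ ∧ (s1,s2,Δ_{e1,e2}(ψ)) ∈ R }, feF(R) = { (s1,s2,ψ) | ∀ s1 ⇝^{e1} s1', ∃ s2 ⇝^{e2} s2', (s1',s2') ∈ next^R_{e1,e2}(ψ) }, and fe = ν.feF. If ψ is a safety relation and (I1, I2, ψ) ∈ fe, then for every trace τ1 of TS1 there exists a trace τ2 of TS2 with (τ1, τ2) ∈ ψ. -/
import Mathlib


/-- A labeled transition system: states, optional-event-labeled steps, an initial state. -/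
structure LTS (S E : Type*) where
  init : S
  step : S → Option E → S → Prop

namespace LTS

/-- Silent transition. -/
def Silent {S E : Type*} (T : LTS S E) (s s' : S) : Prop := T.step s none s'

/-- `Obs T s e s'`: finitely many silent steps followed by an `e`-labeled step. -/
def Obs {S E : Type*} (T : LTS S E) (s : S) (e : E) (s' : S) : Prop :=
  ∃ s'', Relation.ReflTransGen T.Silent s s'' ∧ T.step s'' (some e) s'

/-- `τ` is an (infinite) trace originating from state `s`. -/
def IsTraceFrom {S E : Type*} (T : LTS S E) (s : S) (τ : ℕ → E) : Prop :=
  ∃ π : ℕ → S, π 0 = s ∧ ∀ i, T.Obs (π i) (τ i) (π (i + 1))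

end LTS

/-- Greatest fixed point of an operator on subsets. -/
def nuSet {A : Type*} (F : Set A → Set A) : Set A := ⋃₀ {R | R ⊆ F R}

/-- Prepend an event to an infinite trace. -/
def cons {E : Type*} (e : E) (τ : ℕ → E) : ℕ → E
  | 0 => e
  | n + 1 => τ n

/-- The trace obtained by dropping the first letter. -/
def tail {E : Type*} (τ : ℕ → E) : ℕ → E := fun i => τ (i + 1)

/-- Concatenation of the length-`n` prefix of `τ` with the infinite trace `τ'`. -/
def pcat {E : Type*} (τ : ℕ → E) (n : ℕ) (τ' : ℕ → E) : ℕ → E :=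
  fun i => if i < n then τ i else τ' (i - n)

/-- The safety closure of a binary trace relation. -/
def safeCl {E1 E2 : Type*} (ψ : Set ((ℕ → E1) × (ℕ → E2))) : Set ((ℕ → E1) × (ℕ → E2)) :=
  {p | ∀ n, ∃ (τ1' : ℕ → E1) (τ2' : ℕ → E2), (pcat p.1 n τ1', pcat p.2 n τ2') ∈ ψ}

/-- The Brzozowski-style derivative of a binary trace relation. -/
def rderiv {E1 E2 : Type*} (e1 : E1) (e2 : E2) (ψ : Set ((ℕ → E1) × (ℕ → E2))) :
    Set ((ℕ → E1) × (ℕ → E2)) :=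
  {p | (cons e1 p.1, cons e2 p.2) ∈ ψ}

/-- The `next` operator on pairs of states, relative to relation `R` on triples. -/
def nextOp {S1 S2 E1 E2 : Type*}
    (R : Set (S1 × S2 × Set ((ℕ → E1) × (ℕ → E2)))) (e1 : E1) (e2 : E2)
    (ψ : Set ((ℕ → E1) × (ℕ → E2))) : Set (S1 × S2) :=
  {p | rderiv e1 e2 ψ ≠ ∅ ∧ (p.1, p.2, rderiv e1 e2 ψ) ∈ R}

/-- The functor underlying the coinductive relation `fe`. -/
def feF {S1 S2 E1 E2 : Type*} (T1 : LTS S1 E1) (T2 : LTS S2 E2)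
    (R : Set (S1 × S2 × Set ((ℕ → E1) × (ℕ → E2)))) :
    Set (S1 × S2 × Set ((ℕ → E1) × (ℕ → E2))) :=
  {t | ∀ e1 s1', T1.Obs t.1 e1 s1' →
        ∃ e2 s2', T2.Obs t.2.1 e2 s2' ∧ (s1', s2') ∈ nextOp R e1 e2 t.2.2}

theorem fe_sound {S1 S2 E1 E2 : Type*} (T1 : LTS S1 E1) (T2 : LTS S2 E2)
    (ψ : Set ((ℕ → E1) × (ℕ → E2))) (hsafety : safeCl ψ ⊆ ψ)
    (h : (T1.init, T2.init, ψ) ∈ nuSet (feF T1 T2)) :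
    ∀ τ1 : ℕ → E1, T1.IsTraceFrom T1.init τ1 →
      ∃ τ2 : ℕ → E2, T2.IsTraceFrom T2.init τ2 ∧ (τ1, τ2) ∈ ψ := by
  classical
  obtain ⟨R, hR, hmem⟩ := h
  rintro τ1 ⟨π1, hπ0, hπ⟩
  have key : ∀ (n : ℕ) (s2 : S2) (φ : Set ((ℕ → E1) × (ℕ → E2))), (π1 n, s2, φ) ∈ R →
      ∃ z : E2 × S2 × Set ((ℕ → E1) × (ℕ → E2)),
        T2.Obs s2 z.1 z.2.1 ∧ (π1 (n+1), z.2.1, z.2.2) ∈ R ∧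
        z.2.2 = rderiv (τ1 n) z.1 φ ∧ z.2.2.Nonempty := by
    intro n s2 φ hm
    obtain ⟨e2, s2', hobs, hne, hR'⟩ := hR hm (τ1 n) (π1 (n+1)) (hπ n)
    exact ⟨(e2, s2', rderiv (τ1 n) e2 φ), hobs, hR', rfl,
      Set.nonempty_iff_ne_empty.2 hne⟩
  let f : ∀ n : ℕ, {p : S2 × Set ((ℕ → E1) × (ℕ → E2)) // (π1 n, p.1, p.2) ∈ R} :=
    fun n => Nat.rec ⟨(T2.init, ψ), by rw [hπ0]; exact hmem⟩
      (fun n ih =>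
        ⟨((Classical.choose (key n ih.1.1 ih.1.2 ih.2)).2.1,
          (Classical.choose (key n ih.1.1 ih.1.2 ih.2)).2.2),
         (Classical.choose_spec (key n ih.1.1 ih.1.2 ih.2)).2.1⟩) n
  let τ2 : ℕ → E2 := fun n => (Classical.choose (key n (f n).1.1 (f n).1.2 (f n).2)).1
  have spec : ∀ n, T2.Obs (f n).1.1 (τ2 n) ((f (n+1)).1.1) ∧
      ((f (n+1)).1.2 = rderiv (τ1 n) (τ2 n) ((f n).1.2)) ∧ ((f (n+1)).1.2).Nonempty := by
    intro n
    have hs := Classical.choose_spec (key n (f n).1.1 (f n).1.2 (f n).2)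
    exact ⟨hs.1, hs.2.2.1, hs.2.2.2⟩
  have hclaim : ∀ n, ∀ p ∈ (f n).1.2, (pcat τ1 n p.1, pcat τ2 n p.2) ∈ ψ := by
    intro n
    induction n with
    | zero =>
      intro p hp
      have h1 : pcat τ1 0 p.1 = p.1 := by funext i; simp [pcat]
      have h2 : pcat τ2 0 p.2 = p.2 := by funext i; simp [pcat]
      rw [h1, h2]
      exact hp
    | succ n ih =>
      intro p hp
      rw [(spec n).2.1] at hp
      have hmem' : (cons (τ1 n) p.1, cons (τ2 n) p.2) ∈ (f n).1.2 := hp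
      have := ih _ hmem'
      have e1 : pcat τ1 n (cons (τ1 n) p.1) = pcat τ1 (n+1) p.1 := by
        funext i
        simp only [pcat]
        rcases lt_trichotomy i n with hlt | heq | hgt
        · rw [if_pos hlt, if_pos (Nat.lt_succ_of_lt hlt)]
        · subst heq
          rw [if_neg (lt_irrefl i), if_pos (Nat.lt_succ_self i), Nat.sub_self]
          rfl
        · rw [if_neg (not_lt.2 hgt.le), if_neg (not_lt.2 hgt)]
          have : i - n = (i - (n+1)) + 1 := by omega
          rw [this]
          rfl
      have e2 : pcat τ2 n (cons (τ2 n) p.2) = pcat τ2 (n+1) p.2 := by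
        funext i
        simp only [pcat]
        rcases lt_trichotomy i n with hlt | heq | hgt
        · rw [if_pos hlt, if_pos (Nat.lt_succ_of_lt hlt)]
        · subst heq
          rw [if_neg (lt_irrefl i), if_pos (Nat.lt_succ_self i), Nat.sub_self]
          rfl
        · rw [if_neg (not_lt.2 hgt.le), if_neg (not_lt.2 hgt)]
          have : i - n = (i - (n+1)) + 1 := by omega
          rw [this]
          rfl
      rw [e1, e2] at this
      exact this
  refine ⟨τ2, ⟨fun n => (f n).1.1, rfl, fun n => (spec n).1⟩, hsafety ?_⟩
  intro n
  obtain ⟨q, hq⟩ := (spec n).2.2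
  refine ⟨cons (τ1 n) q.1, cons (τ2 n) q.2, ?_⟩
  have := hclaim (n+1) q hq
  have e1 : pcat τ1 n (cons (τ1 n) q.1) = pcat τ1 (n+1) q.1 := by
    funext i
    simp only [pcat]
    rcases lt_trichotomy i n with hlt | heq | hgt
    · rw [if_pos hlt, if_pos (Nat.lt_succ_of_lt hlt)]
    · subst heq
      rw [if_neg (lt_irrefl i), if_pos (Nat.lt_succ_self i), Nat.sub_self]
      rfl
    · rw [if_neg (not_lt.2 hgt.le), if_neg (not_lt.2 hgt)]
      have : i - n = (i - (n+1)) + 1 := by omega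
      rw [this]
      rfl
  have e2 : pcat τ2 n (cons (τ2 n) q.2) = pcat τ2 (n+1) q.2 := by
    funext i
    simp only [pcat]
    rcases lt_trichotomy i n with hlt | heq | hgt
    · rw [if_pos hlt, if_pos (Nat.lt_succ_of_lt hlt)]
    · subst heq
      rw [if_neg (lt_irrefl i), if_pos (Nat.lt_succ_self i), Nat.sub_self]
      rfl
    · rw [if_neg (not_lt.2 hgt.le), if_neg (not_lt.2 hgt)]
      have : i - n = (i - (n+1)) + 1 := by omega
      rw [this]
      rfl
  simpa [e1, e2] using this
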